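/- Suppose F ⊆ binom([n],k), G ⊆ binom([n],ℓ) are nonempty, initial, and cross-intersecting families. Then ϱ(F) + ϱ(G) ≥ 1. -/

import Mathlib

def prec (A B : Finset ℕ) : Prop :=
  List.Forall₂ (· ≤ ·) (A.sort (· ≤ ·)) (B.sort (· ≤ ·))

open List Finset

lemma list_eq_of_perm_of_sorted {l₁ l₂ : List ℕ} (hp : l₁ ~ l₂) (h1 : l₁.Pairwise (· ≤ ·))
    (h2 : l₂.Pairwise (· ≤ ·)) : l₁ = l₂ :=
  List.Perm.eq_of_pairwise' h1 h2 hp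

lemma forall2_append {l₁ l₂ u₁ u₂ : List ℕ} (h : Forall₂ (· ≤ ·) l₁ l₂)
    (h' : Forall₂ (· ≤ ·) u₁ u₂) : Forall₂ (· ≤ ·) (l₁ ++ u₁) (l₂ ++ u₂) := by
  induction h with
  | nil => exact h'
  | cons hab _ ih => exact Forall₂.cons hab ih

lemma forall2_cons_erase : ∀ (l : List ℕ) (y x : ℕ), l.Pairwise (· ≤ ·) → x ∈ l →
    (∀ z ∈ l, y ≤ z) → Forall₂ (· ≤ ·) (y :: l.erase x) l := by
  intro l
  induction l with
  | nil => intro y x _ hx; simp at hx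
  | cons a t ih =>
    intro y x hs hx hy
    by_cases hxa : x = a
    · have h1 : (a :: t).erase x = t := by rw [hxa, List.erase_cons_head]
      rw [h1]
      exact Forall₂.cons (hy a (by simp)) (List.forall₂_refl t)
    · have hxt : x ∈ t := by rcases List.mem_cons.mp hx with h | h; exact absurd h hxa; exact h
      have h1 : (a :: t).erase x = a :: t.erase x := by
        rw [List.erase_cons_tail]
        simp only [beq_iff_eq]
        exact fun h => hxa h.symm
      rw [h1]
      refine Forall₂.cons (hy a (by simp)) ?_
      exact ih a x hs.of_cons hxt (fun z hz => (List.pairwise_cons.mp hs).1 z hz)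

lemma forall2_shift : ∀ (t : List ℕ) (a n : ℕ), (a :: t).Pairwise (· ≤ ·) →
    (∀ x ∈ a :: t, x ≤ n) → Forall₂ (· ≤ ·) (a :: t) (t ++ [n]) := by
  intro t
  induction t with
  | nil => intro a n _ hb; exact Forall₂.cons (hb a (by simp)) Forall₂.nil
  | cons b u ih =>
    intro a n hs hb
    refine Forall₂.cons ((List.pairwise_cons.mp hs).1 b (by simp)) ?_
    exact ih b n hs.of_cons (fun x hx => hb x (List.mem_cons_of_mem a hx))

lemma forall2_orderedInsert : ∀ (l : List ℕ) (j n : ℕ), l.Pairwise (· ≤ ·) →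
    (∀ x ∈ l, x ≤ n) → j ≤ n →
    Forall₂ (· ≤ ·) (l.orderedInsert (· ≤ ·) j) (l ++ [n]) := by
  intro l
  induction l with
  | nil => intro j n _ _ hj; exact Forall₂.cons hj Forall₂.nil
  | cons a t ih =>
    intro j n hs hb hj
    by_cases h : j ≤ a
    · rw [List.orderedInsert, if_pos h]
      exact Forall₂.cons h (forall2_shift t a n hs hb)
    · rw [List.orderedInsert, if_neg h]
      refine Forall₂.cons (le_refl a) ?_
      exact ih j n hs.of_cons (fun x hx => hb x (List.mem_cons_of_mem a hx)) hj

lemma forall2_range' : ∀ (l : List ℕ) (m : ℕ), l.Pairwise (· < ·) →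
    (∀ x ∈ l, m ≤ x) → Forall₂ (· ≤ ·) (List.range' m l.length) l := by
  intro l
  induction l with
  | nil => intro m _ _; exact Forall₂.nil
  | cons a t ih =>
    intro m hs hm
    rw [List.length_cons, List.range'_succ]
    refine Forall₂.cons (hm a (by simp)) (ih (m + 1) hs.of_cons ?_)
    intro x hx
    have h1 := (List.pairwise_cons.mp hs).1 x hx
    have h2 := hm a (by simp)
    omega
def deg (F : Finset (Finset ℕ)) (i : ℕ) : ℕ :=
  ((F.filter (fun A => i ∈ A)).image (fun A => A.erase i)).card

def rho (n : ℕ) (F : Finset (Finset ℕ)) : ℚ :=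
  (((Finset.Icc 1 n).sup (deg F) : ℕ) : ℚ) / F.card
lemma sort_perm_cons {s : Finset ℕ} {b : ℕ} (hb : b ∉ s) :
    (insert b s).sort (· ≤ ·) ~ b :: s.sort (· ≤ ·) := by
  have h1 : ((insert b s).sort (· ≤ ·) : Multiset ℕ) = (b :: s.sort (· ≤ ·) : List ℕ) := by
    rw [Finset.sort_eq, Finset.insert_val_of_notMem hb, ← Multiset.cons_coe, Finset.sort_eq]
  exact Multiset.coe_eq_coe.mp h1

lemma sort_insert_top {s : Finset ℕ} {b : ℕ} (h : ∀ x ∈ s, x < b) :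
    (insert b s).sort (· ≤ ·) = s.sort (· ≤ ·) ++ [b] := by
  have hb : b ∉ s := fun hmem => lt_irrefl b (h b hmem)
  refine list_eq_of_perm_of_sorted ((sort_perm_cons hb).trans ((List.perm_append_singleton b _).symm)) (Finset.pairwise_sort _ _) ?_
  · rw [List.pairwise_append]
    refine ⟨Finset.pairwise_sort _ _, List.pairwise_singleton _ b, ?_⟩
    intro x hx y hy
    rw [List.mem_singleton] at hy
    subst hy
    exact le_of_lt (h x (by rwa [Finset.mem_sort] at hx))

lemma sort_insert_mid {s : Finset ℕ} {j : ℕ} (hj : j ∉ s) :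
    (insert j s).sort (· ≤ ·) = (s.sort (· ≤ ·)).orderedInsert (· ≤ ·) j := by
  refine list_eq_of_perm_of_sorted ((sort_perm_cons hj).trans (List.perm_orderedInsert _ _ _).symm) (Finset.pairwise_sort _ _) ?_
  exact List.Pairwise.orderedInsert j _ (Finset.pairwise_sort _ _)

lemma sort_erase {s : Finset ℕ} {j : ℕ} :
    (s.erase j).sort (· ≤ ·) = (s.sort (· ≤ ·)).erase j := by
  refine list_eq_of_perm_of_sorted ?_ (Finset.pairwise_sort _ _) ?_
  · have h1 : ((s.erase j).sort (· ≤ ·) : Multiset ℕ) = ((s.sort (· ≤ ·)).erase j : List ℕ) := by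
      rw [Finset.sort_eq, Finset.erase_val, ← Multiset.coe_erase, Finset.sort_eq]
    exact Multiset.coe_eq_coe.mp h1
  · exact (Finset.pairwise_sort _ _).sublist List.erase_sublist

lemma sort_Icc_one (k : ℕ) : (Finset.Icc 1 k).sort (· ≤ ·) = List.range' 1 k := by
  refine list_eq_of_perm_of_sorted ?_ (Finset.pairwise_sort _ _) ?_
  · have h1 : ((Finset.Icc 1 k).sort (· ≤ ·) : Multiset ℕ) = (List.range' 1 k : List ℕ) := by
      rw [Finset.sort_eq, Nat.Icc_eq_range']
      norm_num
    exact Multiset.coe_eq_coe.mp h1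
  · exact List.Pairwise.imp Nat.le_of_lt (List.pairwise_lt_range' (s := 1) (n := k))
lemma prec_bot {A : Finset ℕ} {k : ℕ} (hc : A.card = k) (hpos : ∀ x ∈ A, 1 ≤ x) :
    prec (Finset.Icc 1 k) A := by
  unfold prec
  rw [sort_Icc_one]
  have hl : (A.sort (· ≤ ·)).length = k := by rw [Finset.length_sort, hc]
  rw [← hl]
  exact forall2_range' _ 1 (Finset.sortedLT_sort A).pairwise
    (fun x hx => hpos x (by rwa [Finset.mem_sort] at hx))

lemma prec_insert_one {A : Finset ℕ} {j : ℕ} (hj : j ∈ A) (h1 : 1 ∉ A)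
    (hpos : ∀ x ∈ A, 1 ≤ x) : prec (insert 1 (A.erase j)) A := by
  unfold prec
  have e1 : (insert 1 (A.erase j)).sort (· ≤ ·) = 1 :: (A.erase j).sort (· ≤ ·) :=
    Finset.sort_insert _ (fun b hb => hpos b (Finset.mem_of_mem_erase hb))
      (fun hmem => h1 (Finset.mem_of_mem_erase hmem))
  rw [e1, sort_erase]
  exact forall2_cons_erase _ 1 j (Finset.pairwise_sort _ _) (Finset.mem_sort _ |>.mpr hj)
    (fun z hz => hpos z (by rwa [Finset.mem_sort] at hz))

lemma prec_insert_max {B C : Finset ℕ} {m : ℕ} (h : prec B C) (hB : ∀ x ∈ B, x < m)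
    (hC : ∀ x ∈ C, x < m) : prec (insert m B) (insert m C) := by
  unfold prec
  rw [sort_insert_top hB, sort_insert_top hC]
  exact forall2_append h (Forall₂.cons (le_refl m) Forall₂.nil)

lemma prec_swap_max {C : Finset ℕ} {j m : ℕ} (hjC : j ∉ C) (hj : j ≤ m)
    (hb : ∀ x ∈ C, x < m) : prec (insert j C) (insert m C) := by
  unfold prec
  rw [sort_insert_mid hjC, sort_insert_top hb]
  exact forall2_orderedInsert _ j m (Finset.pairwise_sort _ _)
    (fun x hx => le_of_lt (hb x (by rwa [Finset.mem_sort] at hx))) hj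
lemma sum_deg {n k : ℕ} {F : Finset (Finset ℕ)} (hsub : ∀ A ∈ F, A ⊆ Finset.Icc 1 n)
    (hcard : ∀ A ∈ F, A.card = k) :
    ∑ j ∈ Finset.Icc 1 n, (F.filter (fun A => j ∈ A)).card = k * F.card := by
  have h1 : ∀ j, (F.filter (fun A => j ∈ A)).card = ∑ A ∈ F, if j ∈ A then 1 else 0 := by
    intro j; rw [Finset.card_filter]
  simp_rw [h1]
  rw [Finset.sum_comm]
  have h2 : ∀ A ∈ F, (∑ j ∈ Finset.Icc 1 n, if j ∈ A then 1 else 0) = k := by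
    intro A hA
    rw [Finset.sum_ite_mem]
    rw [Finset.inter_eq_right.mpr (hsub A hA)]
    simp [hcard A hA]
  rw [Finset.sum_congr rfl h2, Finset.sum_const, smul_eq_mul, mul_comm]

lemma card_filter_le_one {n : ℕ} {F : Finset (Finset ℕ)}
    (hsub : ∀ A ∈ F, A ⊆ Finset.Icc 1 n)
    (hinit : ∀ A B : Finset ℕ, A ⊆ Finset.Icc 1 n → prec A B → B ∈ F → A ∈ F)
    (hn : 1 ≤ n) (j : ℕ) :
    (F.filter (fun A => j ∈ A)).card ≤ (F.filter (fun A => 1 ∈ A)).card := by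
  by_cases hj1 : j = 1
  · subst hj1; exact le_refl _
  refine Finset.card_le_card_of_injOn
    (fun A => if 1 ∈ A then A else insert 1 (A.erase j)) ?_ ?_
  · intro A hA
    rw [Finset.mem_coe, Finset.mem_filter] at hA
    obtain ⟨hAF, hjA⟩ := hA
    dsimp only
    by_cases h1 : 1 ∈ A
    · rw [if_pos h1]; exact Finset.mem_filter.mpr ⟨hAF, h1⟩
    · rw [if_neg h1]
      refine Finset.mem_filter.mpr ⟨?_, Finset.mem_insert_self 1 _⟩
      refine hinit _ A ?_ ?_ hAF
      · intro x hx
        rcases Finset.mem_insert.mp hx with rfl | hx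
        · exact Finset.mem_Icc.mpr ⟨le_refl 1, hn⟩
        · exact hsub A hAF (Finset.mem_of_mem_erase hx)
      · exact prec_insert_one hjA h1
          (fun x hx => (Finset.mem_Icc.mp (hsub A hAF hx)).1)
  · intro A hA A' hA' heq
    simp only [Finset.coe_filter, Set.mem_setOf_eq] at hA hA'
    dsimp only at heq
    by_cases h1 : 1 ∈ A <;> by_cases h1' : 1 ∈ A'
    · rwa [if_pos h1, if_pos h1'] at heq
    · rw [if_pos h1, if_neg h1'] at heq
      exfalso
      have : j ∈ insert 1 (A'.erase j) := heq ▸ hA.2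
      rcases Finset.mem_insert.mp this with h | h
      · exact hj1 h
      · exact (Finset.notMem_erase j A') h
    · rw [if_neg h1, if_pos h1'] at heq
      exfalso
      have : j ∈ insert 1 (A.erase j) := heq ▸ hA'.2
      rcases Finset.mem_insert.mp this with h | h
      · exact hj1 h
      · exact (Finset.notMem_erase j A) h
    · rw [if_neg h1, if_neg h1'] at heq
      have h2 : A.erase j = A'.erase j := by
        have h3 : (insert 1 (A.erase j)).erase 1 = (insert 1 (A'.erase j)).erase 1 := by
          rw [heq]
        rwa [Finset.erase_insert (fun h => h1 (Finset.mem_of_mem_erase h)),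
          Finset.erase_insert (fun h => h1' (Finset.mem_of_mem_erase h))] at h3
      calc A = insert j (A.erase j) := (Finset.insert_erase hA.2).symm
        _ = insert j (A'.erase j) := by rw [h2]
        _ = A' := Finset.insert_erase hA'.2

lemma card_image_erase {F : Finset (Finset ℕ)} {m : ℕ} (h : ∀ A ∈ F, m ∈ A) :
    (F.image (fun A => A.erase m)).card = F.card := by
  refine Finset.card_image_of_injOn ?_
  intro A hA A' hA' heq
  dsimp only at heq
  calc A = insert m (A.erase m) := (Finset.insert_erase (h A hA)).symm
    _ = insert m (A'.erase m) := by rw [heq]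
    _ = A' := Finset.insert_erase (h A' hA')

lemma mediant {a b c d : ℚ} (hc : 0 < c) (hd : 0 < d) :
    min (a / c) (b / d) ≤ (a + b) / (c + d) := by
  rcases le_total (a / c) (b / d) with h | h
  · rw [min_eq_left h]
    rw [div_le_div_iff₀ hc hd] at h
    rw [div_le_div_iff₀ hc (by linarith)]
    nlinarith
  · rw [min_eq_right h]
    rw [div_le_div_iff₀ hd hc] at h
    rw [div_le_div_iff₀ hd (by linarith)]
    nlinarith
section Parts
variable {n : ℕ} {H : Finset (Finset ℕ)}

lemma partm_sub (hsub : ∀ A ∈ H, A ⊆ Finset.Icc 1 (n + 1)) :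
    ∀ A ∈ H.filter (fun A => (n + 1) ∉ A), A ⊆ Finset.Icc 1 n := by
  intro A hA x hx
  rw [Finset.mem_filter] at hA
  have h1 := Finset.mem_Icc.mp (hsub A hA.1 hx)
  have h2 : x ≠ n + 1 := fun h => hA.2 (h ▸ hx)
  exact Finset.mem_Icc.mpr ⟨h1.1, by omega⟩

lemma partm_init (hinit : ∀ A B : Finset ℕ, A ⊆ Finset.Icc 1 (n + 1) → prec A B → B ∈ H → A ∈ H) :
    ∀ A B : Finset ℕ, A ⊆ Finset.Icc 1 n → prec A B →
      B ∈ H.filter (fun A => (n + 1) ∉ A) → A ∈ H.filter (fun A => (n + 1) ∉ A) := by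
  intro A B hA hp hB
  rw [Finset.mem_filter] at hB ⊢
  refine ⟨hinit A B (hA.trans (Finset.Icc_subset_Icc_right (by omega))) hp hB.1, ?_⟩
  intro hmem
  exact absurd (Finset.mem_Icc.mp (hA hmem)).2 (by omega)

lemma partm_nonempty {k : ℕ} (hne : H.Nonempty) (hsub : ∀ A ∈ H, A ⊆ Finset.Icc 1 (n + 1))
    (hcard : ∀ A ∈ H, A.card = k)
    (hinit : ∀ A B : Finset ℕ, A ⊆ Finset.Icc 1 (n + 1) → prec A B → B ∈ H → A ∈ H)
    (hk : k ≤ n) : (H.filter (fun A => (n + 1) ∉ A)).Nonempty := by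
  obtain ⟨A₀, hA₀⟩ := hne
  have h1 : Finset.Icc 1 k ∈ H := by
    refine hinit _ A₀ (Finset.Icc_subset_Icc_right (by omega)) ?_ hA₀
    exact prec_bot (hcard A₀ hA₀) (fun x hx => (Finset.mem_Icc.mp (hsub A₀ hA₀ hx)).1)
  refine ⟨Finset.Icc 1 k, Finset.mem_filter.mpr ⟨h1, ?_⟩⟩
  intro hmem
  exact absurd (Finset.mem_Icc.mp hmem).2 (by omega)

lemma partd_sub (hsub : ∀ A ∈ H, A ⊆ Finset.Icc 1 (n + 1)) :
    ∀ A' ∈ (H.filter (fun A => (n + 1) ∈ A)).image (fun A => A.erase (n + 1)),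
      A' ⊆ Finset.Icc 1 n := by
  intro A' hA' x hx
  obtain ⟨A, hA, rfl⟩ := Finset.mem_image.mp hA'
  rw [Finset.mem_filter] at hA
  have h1 := Finset.mem_Icc.mp (hsub A hA.1 (Finset.mem_of_mem_erase hx))
  have h2 : x ≠ n + 1 := Finset.ne_of_mem_erase hx
  exact Finset.mem_Icc.mpr ⟨h1.1, by omega⟩

lemma partd_card {k : ℕ} (hcard : ∀ A ∈ H, A.card = k) :
    ∀ A' ∈ (H.filter (fun A => (n + 1) ∈ A)).image (fun A => A.erase (n + 1)),
      A'.card = k - 1 := by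
  intro A' hA'
  obtain ⟨A, hA, rfl⟩ := Finset.mem_image.mp hA'
  rw [Finset.mem_filter] at hA
  rw [Finset.card_erase_of_mem hA.2, hcard A hA.1]

lemma partd_init (hsub : ∀ A ∈ H, A ⊆ Finset.Icc 1 (n + 1))
    (hinit : ∀ A B : Finset ℕ, A ⊆ Finset.Icc 1 (n + 1) → prec A B → B ∈ H → A ∈ H) :
    ∀ A' B' : Finset ℕ, A' ⊆ Finset.Icc 1 n → prec A' B' →
      B' ∈ (H.filter (fun A => (n + 1) ∈ A)).image (fun A => A.erase (n + 1)) →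
      A' ∈ (H.filter (fun A => (n + 1) ∈ A)).image (fun A => A.erase (n + 1)) := by
  intro A' B' hA' hp hB'
  obtain ⟨B, hB, rfl⟩ := Finset.mem_image.mp hB'
  rw [Finset.mem_filter] at hB
  have hA'n : (n + 1) ∉ A' := fun h => absurd (Finset.mem_Icc.mp (hA' h)).2 (by omega)
  have hprec : prec (insert (n + 1) A') B := by
    have h1 : prec (insert (n + 1) A') (insert (n + 1) (B.erase (n + 1))) := by
      refine prec_insert_max hp ?_ ?_
      · intro x hx
        have := (Finset.mem_Icc.mp (hA' hx)).2; omega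
      · intro x hx
        have h2 := (Finset.mem_Icc.mp (hsub B hB.1 (Finset.mem_of_mem_erase hx))).2
        have h3 := Finset.ne_of_mem_erase hx
        omega
    rwa [Finset.insert_erase hB.2] at h1
  have h4 : insert (n + 1) A' ∈ H := by
    refine hinit _ B ?_ hprec hB.1
    intro x hx
    rcases Finset.mem_insert.mp hx with rfl | hx
    · exact Finset.mem_Icc.mpr ⟨by omega, le_refl _⟩
    · exact Finset.Icc_subset_Icc_right (by omega) (hA' hx)
  refine Finset.mem_image.mpr ⟨insert (n + 1) A', Finset.mem_filter.mpr ⟨h4, Finset.mem_insert_self _ _⟩, ?_⟩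
  exact Finset.erase_insert hA'n

end Parts
section Cross
variable {n k l : ℕ} {F G : Finset (Finset ℕ)}

lemma cross_mm (hcross : ∀ A ∈ F, ∀ B ∈ G, (A ∩ B).Nonempty) :
    ∀ A ∈ F.filter (fun A => (n + 1) ∉ A), ∀ B ∈ G.filter (fun B => (n + 1) ∉ B),
      (A ∩ B).Nonempty :=
  fun A hA B hB => hcross A (Finset.mem_filter.mp hA).1 B (Finset.mem_filter.mp hB).1

lemma cross_dm (hcross : ∀ A ∈ F, ∀ B ∈ G, (A ∩ B).Nonempty) :
    ∀ A' ∈ (F.filter (fun A => (n + 1) ∈ A)).image (fun A => A.erase (n + 1)),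
      ∀ B ∈ G.filter (fun B => (n + 1) ∉ B), (A' ∩ B).Nonempty := by
  intro A' hA' B hB
  obtain ⟨A, hA, rfl⟩ := Finset.mem_image.mp hA'
  rw [Finset.mem_filter] at hA hB
  obtain ⟨x, hx⟩ := hcross A hA.1 B hB.1
  rw [Finset.mem_inter] at hx
  have hxne : x ≠ n + 1 := fun h => hB.2 (h ▸ hx.2)
  exact ⟨x, Finset.mem_inter.mpr ⟨Finset.mem_erase.mpr ⟨hxne, hx.1⟩, hx.2⟩⟩

lemma cross_md (hcross : ∀ A ∈ F, ∀ B ∈ G, (A ∩ B).Nonempty) :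
    ∀ A ∈ F.filter (fun A => (n + 1) ∉ A),
      ∀ B' ∈ (G.filter (fun B => (n + 1) ∈ B)).image (fun B => B.erase (n + 1)),
      (A ∩ B').Nonempty := by
  intro A hA B' hB'
  have h := cross_dm (F := G) (G := F) (n := n)
    (fun B hB A' hA' => by rw [Finset.inter_comm]; exact hcross A' hA' B hB) B' hB' A hA
  obtain ⟨x, hx⟩ := h
  rw [Finset.mem_inter] at hx
  exact ⟨x, Finset.mem_inter.mpr ⟨hx.2, hx.1⟩⟩

lemma cross_dd (hFsub : ∀ A ∈ F, A ⊆ Finset.Icc 1 (n + 1))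
    (hGsub : ∀ B ∈ G, B ⊆ Finset.Icc 1 (n + 1))
    (hFcard : ∀ A ∈ F, A.card = k) (hGcard : ∀ B ∈ G, B.card = l)
    (hFinit : ∀ A B : Finset ℕ, A ⊆ Finset.Icc 1 (n + 1) → prec A B → B ∈ F → A ∈ F)
    (hcross : ∀ A ∈ F, ∀ B ∈ G, (A ∩ B).Nonempty)
    (hk : 1 ≤ k) (hl : 1 ≤ l) (hsmall : k + l ≤ n + 1) :
    ∀ A' ∈ (F.filter (fun A => (n + 1) ∈ A)).image (fun A => A.erase (n + 1)),
      ∀ B' ∈ (G.filter (fun B => (n + 1) ∈ B)).image (fun B => B.erase (n + 1)),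
      (A' ∩ B').Nonempty := by
  intro A' hA' B' hB'
  obtain ⟨A, hA, rfl⟩ := Finset.mem_image.mp hA'
  obtain ⟨B, hB, rfl⟩ := Finset.mem_image.mp hB'
  rw [Finset.mem_filter] at hA hB
  by_contra hcon
  rw [Finset.not_nonempty_iff_eq_empty] at hcon
  set C := A.erase (n + 1) with hC
  set D := B.erase (n + 1) with hD
  have hCcard : C.card = k - 1 := by rw [hC, Finset.card_erase_of_mem hA.2, hFcard A hA.1]
  have hDcard : D.card = l - 1 := by rw [hD, Finset.card_erase_of_mem hB.2, hGcard B hB.1]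
  have hex : (Finset.Icc 1 n \ (C ∪ D)).Nonempty := by
    by_contra hcon2
    rw [Finset.not_nonempty_iff_eq_empty, Finset.sdiff_eq_empty_iff_subset] at hcon2
    have h1 := Finset.card_le_card hcon2
    have h2 := Finset.card_union_le C D
    rw [Nat.card_Icc] at h1
    omega
  obtain ⟨j, hj⟩ := hex
  rw [Finset.mem_sdiff, Finset.mem_union] at hj
  push_neg at hj
  obtain ⟨hjI, hjC, hjD⟩ := hj
  have hjIcc := Finset.mem_Icc.mp hjI
  have hAins : insert j C ∈ F := by
    refine hFinit _ A ?_ ?_ hA.1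
    · intro x hx
      rcases Finset.mem_insert.mp hx with rfl | hx
      · exact Finset.mem_Icc.mpr ⟨hjIcc.1, by omega⟩
      · exact hFsub A hA.1 (Finset.mem_of_mem_erase hx)
    · have h1 : prec (insert j C) (insert (n + 1) C) := by
        refine prec_swap_max hjC (by omega) ?_
        intro x hx
        have h2 := (Finset.mem_Icc.mp (hFsub A hA.1 (Finset.mem_of_mem_erase hx))).2
        have h3 := Finset.ne_of_mem_erase hx
        omega
      rwa [hC, Finset.insert_erase hA.2] at h1
  obtain ⟨x, hx⟩ := hcross _ hAins B hB.1
  rw [Finset.mem_inter, Finset.mem_insert] at hx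
  rcases hx.1 with rfl | hxC
  · have : x ∈ D := Finset.mem_erase.mpr ⟨by omega, hx.2⟩
    exact hjD this
  · have hxD : x ∈ D := by
      refine Finset.mem_erase.mpr ⟨Finset.ne_of_mem_erase hxC, hx.2⟩
    have : x ∈ C ∩ D := Finset.mem_inter.mpr ⟨hxC, hxD⟩
    rw [hcon] at this
    exact absurd this (Finset.notMem_empty x)

lemma partd_cardeq {H : Finset (Finset ℕ)} {m : ℕ} :
    ((H.filter (fun A => m ∈ A)).image (fun A => A.erase m)).card
      = (H.filter (fun A => m ∈ A)).card :=
  card_image_erase (fun A hA => (Finset.mem_filter.mp hA).2)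

lemma partd_filter1 {H : Finset (Finset ℕ)} (hn : 1 ≤ n) :
    (((H.filter (fun A => (n + 1) ∈ A)).image (fun A => A.erase (n + 1))).filter
      (fun A => 1 ∈ A)).card = ((H.filter (fun A => (n + 1) ∈ A)).filter
      (fun A => 1 ∈ A)).card := by
  rw [Finset.filter_image]
  have he : ((H.filter (fun A => (n + 1) ∈ A)).filter (fun A => 1 ∈ A.erase (n + 1)))
      = ((H.filter (fun A => (n + 1) ∈ A)).filter (fun A => 1 ∈ A)) := by
    refine Finset.filter_congr ?_
    intro A _
    simp only [Finset.mem_erase]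
    constructor
    · rintro ⟨_, h⟩; exact h
    · intro h; exact ⟨by omega, h⟩
  rw [he]
  refine card_image_erase ?_
  intro A hA
  exact (Finset.mem_filter.mp (Finset.mem_filter.mp hA).1).2

end Cross
lemma key : ∀ (n k l : ℕ) (F G : Finset (Finset ℕ)),
    F.Nonempty → G.Nonempty →
    (∀ A ∈ F, A ⊆ Finset.Icc 1 n) → (∀ A ∈ F, A.card = k) →
    (∀ B ∈ G, B ⊆ Finset.Icc 1 n) → (∀ B ∈ G, B.card = l) →
    (∀ A B : Finset ℕ, A ⊆ Finset.Icc 1 n → prec A B → B ∈ F → A ∈ F) →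
    (∀ A B : Finset ℕ, A ⊆ Finset.Icc 1 n → prec A B → B ∈ G → A ∈ G) →
    (∀ A ∈ F, ∀ B ∈ G, (A ∩ B).Nonempty) →
    1 ≤ ((F.filter (fun A => 1 ∈ A)).card : ℚ) / F.card +
        ((G.filter (fun B => 1 ∈ B)).card : ℚ) / G.card := by
  intro n
  induction n with
  | zero =>
    intro k l F G hFne hGne hFsub _ _ _ _ _ hcross
    obtain ⟨A₀, hA₀⟩ := hFne
    obtain ⟨B₀, hB₀⟩ := hGne
    obtain ⟨x, hx⟩ := hcross A₀ hA₀ B₀ hB₀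
    have h1 := Finset.mem_Icc.mp (hFsub A₀ hA₀ (Finset.mem_inter.mp hx).1)
    omega
  | succ n ih =>
    intro k l F G hFne hGne hFsub hFcard hGsub hGcard hFinit hGinit hcross
    obtain ⟨A₀, hA₀⟩ := hFne
    obtain ⟨B₀, hB₀⟩ := hGne
    obtain ⟨x₀, hx₀⟩ := hcross A₀ hA₀ B₀ hB₀
    rw [Finset.mem_inter] at hx₀
    have hk : 1 ≤ k := by
      rw [← hFcard A₀ hA₀]
      exact Finset.card_pos.mpr ⟨x₀, hx₀.1⟩
    have hl : 1 ≤ l := by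
      rw [← hGcard B₀ hB₀]
      exact Finset.card_pos.mpr ⟨x₀, hx₀.2⟩
    have hkn1 : k ≤ n + 1 := by
      have := Finset.card_le_card (hFsub A₀ hA₀)
      rwa [hFcard A₀ hA₀, Nat.card_Icc] at this
    have hln1 : l ≤ n + 1 := by
      have := Finset.card_le_card (hGsub B₀ hB₀)
      rwa [hGcard B₀ hB₀, Nat.card_Icc] at this
    have hFpos : (0 : ℚ) < (F.card : ℚ) := by
      exact_mod_cast Finset.card_pos.mpr ⟨A₀, hA₀⟩
    have hGpos : (0 : ℚ) < (G.card : ℚ) := by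
      exact_mod_cast Finset.card_pos.mpr ⟨B₀, hB₀⟩
    by_cases hbig : n + 2 ≤ k + l
    · -- large uniformities: degree of 1 is at least k/(n+1)
      have hsF := sum_deg (n := n + 1) hFsub hFcard
      have hsG := sum_deg (n := n + 1) hGsub hGcard
      have hdF : k * F.card ≤ (n + 1) * (F.filter (fun A => 1 ∈ A)).card := by
        calc k * F.card = ∑ j ∈ Finset.Icc 1 (n + 1), (F.filter (fun A => j ∈ A)).card :=
              hsF.symm
          _ ≤ ∑ _j ∈ Finset.Icc 1 (n + 1), (F.filter (fun A => 1 ∈ A)).card :=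
              Finset.sum_le_sum (fun j _ => card_filter_le_one hFsub hFinit (by omega) j)
          _ = (n + 1) * (F.filter (fun A => 1 ∈ A)).card := by
              rw [Finset.sum_const, Nat.card_Icc, smul_eq_mul]; norm_num
      have hdG : l * G.card ≤ (n + 1) * (G.filter (fun B => 1 ∈ B)).card := by
        calc l * G.card = ∑ j ∈ Finset.Icc 1 (n + 1), (G.filter (fun B => j ∈ B)).card :=
              hsG.symm
          _ ≤ ∑ _j ∈ Finset.Icc 1 (n + 1), (G.filter (fun B => 1 ∈ B)).card :=
              Finset.sum_le_sum (fun j _ => card_filter_le_one hGsub hGinit (by omega) j)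
          _ = (n + 1) * (G.filter (fun B => 1 ∈ B)).card := by
              rw [Finset.sum_const, Nat.card_Icc, smul_eq_mul]; norm_num
      rw [div_add_div _ _ (ne_of_gt hFpos) (ne_of_gt hGpos),
        le_div_iff₀ (mul_pos hFpos hGpos), one_mul]
      have e1 : (k : ℚ) * F.card * G.card ≤
          ((n : ℚ) + 1) * (F.filter (fun A => 1 ∈ A)).card * G.card := by
        have h := mul_le_mul_of_nonneg_right (by exact_mod_cast hdF :
          (k : ℚ) * F.card ≤ ((n : ℚ) + 1) * (F.filter (fun A => 1 ∈ A)).card)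
          (le_of_lt hGpos)
        linarith
      have e2 : (l : ℚ) * G.card * F.card ≤
          ((n : ℚ) + 1) * (G.filter (fun B => 1 ∈ B)).card * F.card := by
        have h := mul_le_mul_of_nonneg_right (by exact_mod_cast hdG :
          (l : ℚ) * G.card ≤ ((n : ℚ) + 1) * (G.filter (fun B => 1 ∈ B)).card)
          (le_of_lt hFpos)
        linarith
      have e3 : ((n : ℚ) + 2) ≤ (k : ℚ) + l := by exact_mod_cast hbig
      have hfg1 : (1 : ℚ) ≤ F.card * G.card := by
        have h1 : (1 : ℚ) ≤ (F.card : ℚ) := by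
          exact_mod_cast Finset.card_pos.mpr ⟨A₀, hA₀⟩
        have h2 : (1 : ℚ) ≤ (G.card : ℚ) := by
          exact_mod_cast Finset.card_pos.mpr ⟨B₀, hB₀⟩
        nlinarith
      by_contra hcon
      push_neg at hcon
      have hn0 : (0 : ℚ) ≤ (n : ℚ) := Nat.cast_nonneg n
      nlinarith [mul_le_mul_of_nonneg_right e3 (le_trans zero_le_one hfg1)]
    · -- small uniformities
      have hsmall : k + l ≤ n + 1 := by omega
      have hn : 1 ≤ n := by omega
      have hkn : k ≤ n := by omega
      have hln : l ≤ n := by omega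
      -- common facts about the parts
      have hFmne := partm_nonempty ⟨A₀, hA₀⟩ hFsub hFcard hFinit hkn
      have hGmne := partm_nonempty ⟨B₀, hB₀⟩ hGsub hGcard hGinit hln
      have hFmsub := partm_sub hFsub
      have hGmsub := partm_sub hGsub
      have hFmcard : ∀ A ∈ F.filter (fun A => (n + 1) ∉ A), A.card = k :=
        fun A hA => hFcard A (Finset.filter_subset _ _ hA)
      have hGmcard : ∀ B ∈ G.filter (fun B => (n + 1) ∉ B), B.card = l :=
        fun B hB => hGcard B (Finset.filter_subset _ _ hB)
      have hFminit := partm_init hFinit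
      have hGminit := partm_init hGinit
      have hFsplit : (F.filter (fun A => (n + 1) ∈ A)).card
          + (F.filter (fun A => (n + 1) ∉ A)).card = F.card :=
        Finset.card_filter_add_card_filter_not _
      have hGsplit : (G.filter (fun B => (n + 1) ∈ B)).card
          + (G.filter (fun B => (n + 1) ∉ B)).card = G.card :=
        Finset.card_filter_add_card_filter_not _
      have hF1split : ((F.filter (fun A => (n + 1) ∈ A)).filter (fun A => 1 ∈ A)).card
          + ((F.filter (fun A => (n + 1) ∉ A)).filter (fun A => 1 ∈ A)).card
          = (F.filter (fun A => 1 ∈ A)).card := by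
        rw [Finset.filter_comm, Finset.filter_comm (fun A => (n+1) ∉ A)]
        exact Finset.card_filter_add_card_filter_not _
      have hG1split : ((G.filter (fun B => (n + 1) ∈ B)).filter (fun B => 1 ∈ B)).card
          + ((G.filter (fun B => (n + 1) ∉ B)).filter (fun B => 1 ∈ B)).card
          = (G.filter (fun B => 1 ∈ B)).card := by
        rw [Finset.filter_comm, Finset.filter_comm (fun B => (n+1) ∉ B)]
        exact Finset.card_filter_add_card_filter_not _
      by_cases hFn : (F.filter (fun A => (n + 1) ∈ A)).Nonempty
      · by_cases hGn : (G.filter (fun B => (n + 1) ∈ B)).Nonempty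
        · -- both parts nonempty: four applications of the IH
          have h11 := ih k l _ _ hFmne hGmne hFmsub hFmcard hGmsub hGmcard hFminit hGminit
            (cross_mm hcross)
          have h12 := ih k (l - 1) _ _ hFmne (hGn.image _) hFmsub hFmcard (partd_sub hGsub)
            (partd_card hGcard) hFminit (partd_init hGsub hGinit) (cross_md hcross)
          have h21 := ih (k - 1) l _ _ (hFn.image _) hGmne (partd_sub hFsub)
            (partd_card hFcard) hGmsub hGmcard (partd_init hFsub hFinit) hGminit
            (cross_dm hcross)
          have h22 := ih (k - 1) (l - 1) _ _ (hFn.image _) (hGn.image _) (partd_sub hFsub)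
            (partd_card hFcard) (partd_sub hGsub) (partd_card hGcard)
            (partd_init hFsub hFinit) (partd_init hGsub hGinit)
            (cross_dd hFsub hGsub hFcard hGcard hFinit hcross hk hl hsmall)
          simp only [partd_cardeq, partd_filter1 hn] at h12 h21 h22
          have hfm : (0 : ℚ) < ((F.filter (fun A => (n + 1) ∉ A)).card : ℚ) := by
            exact_mod_cast Finset.card_pos.mpr hFmne
          have hfn : (0 : ℚ) < ((F.filter (fun A => (n + 1) ∈ A)).card : ℚ) := by
            exact_mod_cast Finset.card_pos.mpr hFn
          have hgm : (0 : ℚ) < ((G.filter (fun B => (n + 1) ∉ B)).card : ℚ) := by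
            exact_mod_cast Finset.card_pos.mpr hGmne
          have hgn : (0 : ℚ) < ((G.filter (fun B => (n + 1) ∈ B)).card : ℚ) := by
            exact_mod_cast Finset.card_pos.mpr hGn
          have hXnum : ((F.filter (fun A => 1 ∈ A)).card : ℚ)
              = ((F.filter (fun A => (n + 1) ∈ A)).filter (fun A => 1 ∈ A)).card
              + ((F.filter (fun A => (n + 1) ∉ A)).filter (fun A => 1 ∈ A)).card := by
            exact_mod_cast hF1split.symm
          have hXden : (F.card : ℚ) = ((F.filter (fun A => (n + 1) ∈ A)).card : ℚ)
              + ((F.filter (fun A => (n + 1) ∉ A)).card : ℚ) := by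
            exact_mod_cast hFsplit.symm
          have hYnum : ((G.filter (fun B => 1 ∈ B)).card : ℚ)
              = ((G.filter (fun B => (n + 1) ∈ B)).filter (fun B => 1 ∈ B)).card
              + ((G.filter (fun B => (n + 1) ∉ B)).filter (fun B => 1 ∈ B)).card := by
            exact_mod_cast hG1split.symm
          have hYden : (G.card : ℚ) = ((G.filter (fun B => (n + 1) ∈ B)).card : ℚ)
              + ((G.filter (fun B => (n + 1) ∉ B)).card : ℚ) := by
            exact_mod_cast hGsplit.symm
          have hX := mediant (a := (((F.filter (fun A => (n + 1) ∈ A)).filter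
              (fun A => 1 ∈ A)).card : ℚ)) (b := (((F.filter (fun A => (n + 1) ∉ A)).filter
              (fun A => 1 ∈ A)).card : ℚ)) hfn hfm
          have hY := mediant (a := (((G.filter (fun B => (n + 1) ∈ B)).filter
              (fun B => 1 ∈ B)).card : ℚ)) (b := (((G.filter (fun B => (n + 1) ∉ B)).filter
              (fun B => 1 ∈ B)).card : ℚ)) hgn hgm
          rw [hXnum, hXden, hYnum, hYden]
          rcases le_total
            ((((F.filter (fun A => (n + 1) ∈ A)).filter (fun A => 1 ∈ A)).card : ℚ)
              / ((F.filter (fun A => (n + 1) ∈ A)).card : ℚ))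
            ((((F.filter (fun A => (n + 1) ∉ A)).filter (fun A => 1 ∈ A)).card : ℚ)
              / ((F.filter (fun A => (n + 1) ∉ A)).card : ℚ)) with h | h
          · rw [min_eq_left h] at hX
            rcases le_total
              ((((G.filter (fun B => (n + 1) ∈ B)).filter (fun B => 1 ∈ B)).card : ℚ)
              / ((G.filter (fun B => (n + 1) ∈ B)).card : ℚ))
              ((((G.filter (fun B => (n + 1) ∉ B)).filter (fun B => 1 ∈ B)).card : ℚ)
              / ((G.filter (fun B => (n + 1) ∉ B)).card : ℚ)) with h' | h'
            · rw [min_eq_left h'] at hY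
              linarith
            · rw [min_eq_right h'] at hY
              linarith
          · rw [min_eq_right h] at hX
            rcases le_total
              ((((G.filter (fun B => (n + 1) ∈ B)).filter (fun B => 1 ∈ B)).card : ℚ)
              / ((G.filter (fun B => (n + 1) ∈ B)).card : ℚ))
              ((((G.filter (fun B => (n + 1) ∉ B)).filter (fun B => 1 ∈ B)).card : ℚ)
              / ((G.filter (fun B => (n + 1) ∉ B)).card : ℚ)) with h' | h'
            · rw [min_eq_left h'] at hY
              linarith
            · rw [min_eq_right h'] at hY
              linarith
        · -- G has no sets containing n+1
          have hnoG : ∀ B ∈ G, (n + 1) ∉ B := by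
            intro B hB h
            exact hGn ⟨B, Finset.mem_filter.mpr ⟨hB, h⟩⟩
          have hGsub' : ∀ B ∈ G, B ⊆ Finset.Icc 1 n := by
            intro B hB x hx
            have h1 := Finset.mem_Icc.mp (hGsub B hB hx)
            have h2 : x ≠ n + 1 := fun h => hnoG B hB (h ▸ hx)
            exact Finset.mem_Icc.mpr ⟨h1.1, by omega⟩
          have hGinit' : ∀ A B : Finset ℕ, A ⊆ Finset.Icc 1 n → prec A B → B ∈ G → A ∈ G :=
            fun A B hA hp hB =>
              hGinit A B (hA.trans (Finset.Icc_subset_Icc_right (by omega))) hp hB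
          have h1 := ih k l _ G hFmne ⟨B₀, hB₀⟩ hFmsub hFmcard hGsub' hGcard hFminit hGinit'
            (fun A hA B hB => hcross A (Finset.filter_subset _ _ hA) B hB)
          have h2 := ih (k - 1) l _ G (hFn.image _) ⟨B₀, hB₀⟩ (partd_sub hFsub)
            (partd_card hFcard) hGsub' hGcard (partd_init hFsub hFinit) hGinit'
            (by
              intro A' hA' B hB
              obtain ⟨A, hA, rfl⟩ := Finset.mem_image.mp hA'
              rw [Finset.mem_filter] at hA
              obtain ⟨x, hx⟩ := hcross A hA.1 B hB
              rw [Finset.mem_inter] at hx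
              have hxne : x ≠ n + 1 := fun h => hnoG B hB (h ▸ hx.2)
              exact ⟨x, Finset.mem_inter.mpr ⟨Finset.mem_erase.mpr ⟨hxne, hx.1⟩, hx.2⟩⟩)
          simp only [partd_cardeq, partd_filter1 hn] at h2
          have hfm : (0 : ℚ) < ((F.filter (fun A => (n + 1) ∉ A)).card : ℚ) := by
            exact_mod_cast Finset.card_pos.mpr hFmne
          have hfn : (0 : ℚ) < ((F.filter (fun A => (n + 1) ∈ A)).card : ℚ) := by
            exact_mod_cast Finset.card_pos.mpr hFn
          have hXnum : ((F.filter (fun A => 1 ∈ A)).card : ℚ)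
              = ((F.filter (fun A => (n + 1) ∈ A)).filter (fun A => 1 ∈ A)).card
              + ((F.filter (fun A => (n + 1) ∉ A)).filter (fun A => 1 ∈ A)).card := by
            exact_mod_cast hF1split.symm
          have hXden : (F.card : ℚ) = ((F.filter (fun A => (n + 1) ∈ A)).card : ℚ)
              + ((F.filter (fun A => (n + 1) ∉ A)).card : ℚ) := by
            exact_mod_cast hFsplit.symm
          have hX := mediant (a := (((F.filter (fun A => (n + 1) ∈ A)).filter
              (fun A => 1 ∈ A)).card : ℚ)) (b := (((F.filter (fun A => (n + 1) ∉ A)).filter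
              (fun A => 1 ∈ A)).card : ℚ)) hfn hfm
          rw [hXnum, hXden]
          rcases le_total
            ((((F.filter (fun A => (n + 1) ∈ A)).filter (fun A => 1 ∈ A)).card : ℚ)
              / ((F.filter (fun A => (n + 1) ∈ A)).card : ℚ))
            ((((F.filter (fun A => (n + 1) ∉ A)).filter (fun A => 1 ∈ A)).card : ℚ)
              / ((F.filter (fun A => (n + 1) ∉ A)).card : ℚ)) with h | h
          · rw [min_eq_left h] at hX
            linarith
          · rw [min_eq_right h] at hX
            linarith
      by_cases hGn : (G.filter (fun B => (n + 1) ∈ B)).Nonempty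
      · -- F has no sets containing n+1, G does
        have hnoF : ∀ A ∈ F, (n + 1) ∉ A := by
          intro A hA h
          exact hFn ⟨A, Finset.mem_filter.mpr ⟨hA, h⟩⟩
        have hFsub' : ∀ A ∈ F, A ⊆ Finset.Icc 1 n := by
          intro A hA x hx
          have h1 := Finset.mem_Icc.mp (hFsub A hA hx)
          have h2 : x ≠ n + 1 := fun h => hnoF A hA (h ▸ hx)
          exact Finset.mem_Icc.mpr ⟨h1.1, by omega⟩
        have hFinit' : ∀ A B : Finset ℕ, A ⊆ Finset.Icc 1 n → prec A B → B ∈ F → A ∈ F :=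
          fun A B hA hp hB =>
            hFinit A B (hA.trans (Finset.Icc_subset_Icc_right (by omega))) hp hB
        have h1 := ih k l F _ ⟨A₀, hA₀⟩ hGmne hFsub' hFcard hGmsub hGmcard hFinit' hGminit
          (fun A hA B hB => hcross A hA B (Finset.filter_subset _ _ hB))
        have h2 := ih k (l - 1) F _ ⟨A₀, hA₀⟩ (hGn.image _) hFsub' hFcard (partd_sub hGsub)
          (partd_card hGcard) hFinit' (partd_init hGsub hGinit)
          (by
            intro A hA B' hB'
            obtain ⟨B, hB, rfl⟩ := Finset.mem_image.mp hB'
            rw [Finset.mem_filter] at hB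
            obtain ⟨x, hx⟩ := hcross A hA B hB.1
            rw [Finset.mem_inter] at hx
            have hxne : x ≠ n + 1 := fun h => hnoF A hA (h ▸ hx.1)
            exact ⟨x, Finset.mem_inter.mpr ⟨hx.1, Finset.mem_erase.mpr ⟨hxne, hx.2⟩⟩⟩)
        simp only [partd_cardeq, partd_filter1 hn] at h2
        have hgm : (0 : ℚ) < ((G.filter (fun B => (n + 1) ∉ B)).card : ℚ) := by
          exact_mod_cast Finset.card_pos.mpr hGmne
        have hgn : (0 : ℚ) < ((G.filter (fun B => (n + 1) ∈ B)).card : ℚ) := by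
          exact_mod_cast Finset.card_pos.mpr hGn
        have hYnum : ((G.filter (fun B => 1 ∈ B)).card : ℚ)
            = ((G.filter (fun B => (n + 1) ∈ B)).filter (fun B => 1 ∈ B)).card
            + ((G.filter (fun B => (n + 1) ∉ B)).filter (fun B => 1 ∈ B)).card := by
          exact_mod_cast hG1split.symm
        have hYden : (G.card : ℚ) = ((G.filter (fun B => (n + 1) ∈ B)).card : ℚ)
            + ((G.filter (fun B => (n + 1) ∉ B)).card : ℚ) := by
          exact_mod_cast hGsplit.symm
        have hY := mediant (a := (((G.filter (fun B => (n + 1) ∈ B)).filter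
            (fun B => 1 ∈ B)).card : ℚ)) (b := (((G.filter (fun B => (n + 1) ∉ B)).filter
            (fun B => 1 ∈ B)).card : ℚ)) hgn hgm
        rw [hYnum, hYden]
        rcases le_total
          ((((G.filter (fun B => (n + 1) ∈ B)).filter (fun B => 1 ∈ B)).card : ℚ)
              / ((G.filter (fun B => (n + 1) ∈ B)).card : ℚ))
          ((((G.filter (fun B => (n + 1) ∉ B)).filter (fun B => 1 ∈ B)).card : ℚ)
              / ((G.filter (fun B => (n + 1) ∉ B)).card : ℚ)) with h | h
        · rw [min_eq_left h] at hY
          linarith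
        · rw [min_eq_right h] at hY
          linarith
      · -- neither family has a set containing n+1
        have hnoF : ∀ A ∈ F, (n + 1) ∉ A := by
          intro A hA h
          exact hFn ⟨A, Finset.mem_filter.mpr ⟨hA, h⟩⟩
        have hnoG : ∀ B ∈ G, (n + 1) ∉ B := by
          intro B hB h
          exact hGn ⟨B, Finset.mem_filter.mpr ⟨hB, h⟩⟩
        have hFsub' : ∀ A ∈ F, A ⊆ Finset.Icc 1 n := by
          intro A hA x hx
          have h1 := Finset.mem_Icc.mp (hFsub A hA hx)
          have h2 : x ≠ n + 1 := fun h => hnoF A hA (h ▸ hx)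
          exact Finset.mem_Icc.mpr ⟨h1.1, by omega⟩
        have hGsub' : ∀ B ∈ G, B ⊆ Finset.Icc 1 n := by
          intro B hB x hx
          have h1 := Finset.mem_Icc.mp (hGsub B hB hx)
          have h2 : x ≠ n + 1 := fun h => hnoG B hB (h ▸ hx)
          exact Finset.mem_Icc.mpr ⟨h1.1, by omega⟩
        have hFinit' : ∀ A B : Finset ℕ, A ⊆ Finset.Icc 1 n → prec A B → B ∈ F → A ∈ F :=
          fun A B hA hp hB =>
            hFinit A B (hA.trans (Finset.Icc_subset_Icc_right (by omega))) hp hB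
        have hGinit' : ∀ A B : Finset ℕ, A ⊆ Finset.Icc 1 n → prec A B → B ∈ G → A ∈ G :=
          fun A B hA hp hB =>
            hGinit A B (hA.trans (Finset.Icc_subset_Icc_right (by omega))) hp hB
        exact ih k l F G ⟨A₀, hA₀⟩ ⟨B₀, hB₀⟩ hFsub' hFcard hGsub' hGcard hFinit' hGinit' hcross
theorem stmt_11 (n k l : ℕ) (F G : Finset (Finset ℕ)) (hFne : F.Nonempty) (hGne : G.Nonempty)
    (hFsub : ∀ A ∈ F, A ⊆ Finset.Icc 1 n) (hFcard : ∀ A ∈ F, A.card = k)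
    (hGsub : ∀ B ∈ G, B ⊆ Finset.Icc 1 n) (hGcard : ∀ B ∈ G, B.card = l)
    (hFinit : ∀ A B : Finset ℕ, A ⊆ Finset.Icc 1 n → prec A B → B ∈ F → A ∈ F)
    (hGinit : ∀ A B : Finset ℕ, A ⊆ Finset.Icc 1 n → prec A B → B ∈ G → A ∈ G)
    (hcross : ∀ A ∈ F, ∀ B ∈ G, (A ∩ B).Nonempty) :
    1 ≤ rho n F + rho n G := by
  obtain ⟨A₀, hA₀⟩ := hFne
  obtain ⟨B₀, hB₀⟩ := hGne
  obtain ⟨x, hx⟩ := hcross A₀ hA₀ B₀ hB₀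
  rw [Finset.mem_inter] at hx
  have hn : 1 ≤ n := by
    have := Finset.mem_Icc.mp (hFsub A₀ hA₀ hx.1)
    omega
  have hkey := key n k l F G ⟨A₀, hA₀⟩ ⟨B₀, hB₀⟩ hFsub hFcard hGsub hGcard hFinit hGinit hcross
  have hFpos : (0 : ℚ) < (F.card : ℚ) := by
    exact_mod_cast Finset.card_pos.mpr ⟨A₀, hA₀⟩
  have hGpos : (0 : ℚ) < (G.card : ℚ) := by
    exact_mod_cast Finset.card_pos.mpr ⟨B₀, hB₀⟩
  have hdegF : deg F 1 = (F.filter (fun A => 1 ∈ A)).card :=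
    card_image_erase (fun A hA => (Finset.mem_filter.mp hA).2)
  have hdegG : deg G 1 = (G.filter (fun B => 1 ∈ B)).card :=
    card_image_erase (fun B hB => (Finset.mem_filter.mp hB).2)
  have hsupF : deg F 1 ≤ (Finset.Icc 1 n).sup (deg F) :=
    Finset.le_sup (Finset.mem_Icc.mpr ⟨le_refl 1, hn⟩)
  have hsupG : deg G 1 ≤ (Finset.Icc 1 n).sup (deg G) :=
    Finset.le_sup (Finset.mem_Icc.mpr ⟨le_refl 1, hn⟩)
  have h1 : ((F.filter (fun A => 1 ∈ A)).card : ℚ) / F.card ≤ rho n F := by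
    unfold rho
    rw [div_le_div_iff₀ hFpos hFpos]
    have : ((F.filter (fun A => 1 ∈ A)).card : ℚ) ≤ (((Finset.Icc 1 n).sup (deg F) : ℕ) : ℚ) := by
      exact_mod_cast hdegF ▸ hsupF
    nlinarith
  have h2 : ((G.filter (fun B => 1 ∈ B)).card : ℚ) / G.card ≤ rho n G := by
    unfold rho
    rw [div_le_div_iff₀ hGpos hGpos]
    have : ((G.filter (fun B => 1 ∈ B)).card : ℚ) ≤ (((Finset.Icc 1 n).sup (deg G) : ℕ) : ℚ) := by
      exact_mod_cast hdegG ▸ hsupG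
    nlinarith
  linarith
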